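/- If a power series f(z) = Σ f_n z^n is holonomic (satisfies a linear ODE with polynomial coefficients and nonzero leading coefficient q_0), then f can be analytically continued along any path avoiding the finite set of zeros of q_0; in particular, a holonomic function analytic at 0 has only finitely many singularities. -/

import Mathlib

set_option maxHeartbeats 1600000

open Metric Set Filter MeasureTheory intervalIntegral BoundedContinuousFunction

noncomputable section

variable {E : Type*} [NormedAddCommGroup E] [NormedSpace ℂ E] [CompleteSpace E]

/-- Retraction of `ℂ` onto the closed ball of radius `r` around `z0`. -/
noncomputable def projCB (z0 : ℂ) (r : ℝ) (z : ℂ) : ℂ :=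
  z0 + (min 1 (r / ‖z - z0‖) : ℝ) • (z - z0)

theorem projCB_mem {z0 : ℂ} {r : ℝ} (hr : 0 ≤ r) (z : ℂ) :
    projCB z0 r z ∈ closedBall z0 r := by
  rcases eq_or_ne z z0 with h | h
  · simp [projCB, h, hr]
  · have hpos : 0 < ‖z - z0‖ := by
      simpa [sub_eq_zero] using h
    have : ‖(min 1 (r / ‖z - z0‖) : ℝ) • (z - z0)‖ ≤ r := by
      rw [norm_smul, Real.norm_eq_abs, abs_of_nonneg (le_min zero_le_one (by positivity))]
      calc min 1 (r / ‖z - z0‖) * ‖z - z0‖ ≤ (r / ‖z - z0‖) * ‖z - z0‖ := by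
            gcongr; exact min_le_right _ _
        _ = r := div_mul_cancel₀ r (by simpa using hpos.ne')
    simpa [projCB, mem_closedBall, dist_eq_norm, add_sub_cancel_left] using this

theorem projCB_eq_self {z0 : ℂ} {r : ℝ} {z : ℂ} (hz : z ∈ closedBall z0 r) :
    projCB z0 r z = z := by
  rcases eq_or_ne z z0 with h | h
  · simp [projCB, h]
  · have hpos : 0 < ‖z - z0‖ := by simpa [sub_eq_zero] using h
    have hzr : ‖z - z0‖ ≤ r := by simpa [mem_closedBall, dist_eq_norm] using hz
    have : min 1 (r / ‖z - z0‖) = 1 := min_eq_left (by rw [le_div_iff₀ hpos]; linarith)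
    rw [projCB, this]
    simp

theorem continuous_projCB {z0 : ℂ} {r : ℝ} (hr : 0 < r) : Continuous (projCB z0 r) := by
  rw [continuous_iff_continuousAt]
  intro z
  rcases lt_or_ge ‖z - z0‖ r with h | h
  · have : ∀ᶠ w in nhds z, projCB z0 r w = w := by
      have hb : ball z0 r ∈ nhds z := isOpen_ball.mem_nhds (by simpa [mem_ball, dist_eq_norm])
      filter_upwards [hb] with w hw using projCB_eq_self (ball_subset_closedBall hw)
    exact continuousAt_id.congr (this.mono fun w hw => hw.symm)
  · have hne : ‖z - z0‖ ≠ 0 := (hr.trans_le h).ne'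
    apply ContinuousAt.add continuousAt_const
    have h1 : ContinuousAt (fun w : ℂ => ‖w - z0‖) z := by fun_prop
    have h2 : ContinuousAt (fun w : ℂ => min 1 (r / ‖w - z0‖)) z :=
      continuousAt_const.min (continuousAt_const.div h1 hne)
    exact h2.smul (by fun_prop)


theorem hasDerivAt_segPrimitive {g : ℂ → E} {s : Set ℂ} (hs : IsOpen s) (hconv : Convex ℝ s)
    {z0 : ℂ} (hz0 : z0 ∈ s) (hg : DifferentiableOn ℂ g s) {z : ℂ} (hz : z ∈ s) :
    HasDerivAt (fun w => ∫ t in (0:ℝ)..1, (w - z0) • g (z0 + (t : ℝ) • (w - z0))) (g z) z := by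
  have han := hg.analyticOnNhd hs
  have hg' : ∀ x ∈ s, HasDerivAt g (deriv g x) x := fun x hx =>
    ((han x hx).differentiableAt).hasDerivAt
  have hgc : ContinuousOn g s := hg.continuousOn
  have hdc : ContinuousOn (deriv g) s := (han.deriv).continuousOn
  obtain ⟨ε, εpos, hball⟩ : ∃ ε > 0, closedBall z ε ⊆ s :=
    Metric.nhds_basis_closedBall.mem_iff.1 (hs.mem_nhds hz)
  have hmem : ∀ x ∈ closedBall z ε, ∀ t ∈ Icc (0:ℝ) 1, z0 + t • (x - z0) ∈ s :=
    fun x hx t ht => hconv.add_smul_sub_mem hz0 (hball hx) ht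
  set Kc : Set ℂ := (fun p : ℝ × ℂ => z0 + p.1 • (p.2 - z0)) '' (Icc 0 1 ×ˢ closedBall z ε)
    with hKc
  have hKcompact : IsCompact Kc :=
    (isCompact_Icc.prod (isCompact_closedBall z ε)).image (by fun_prop)
  have hKsub : Kc ⊆ s := by
    rintro _ ⟨⟨t, x⟩, ⟨ht, hx⟩, rfl⟩
    exact hmem x hx t ht
  obtain ⟨C1, hC1⟩ := hKcompact.exists_bound_of_continuousOn (hgc.mono hKsub)
  obtain ⟨C2, hC2⟩ := hKcompact.exists_bound_of_continuousOn (hdc.mono hKsub)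
  have hzK : z ∈ Kc := ⟨(1, z), ⟨⟨zero_le_one, le_refl 1⟩, mem_closedBall_self εpos.le⟩, by simp⟩
  have hC2nonneg : 0 ≤ C2 := le_trans (norm_nonneg _) (hC2 z hzK)
  have hIsub : Set.uIoc (0:ℝ) 1 ⊆ Icc (0:ℝ) 1 := by
    rw [uIoc_of_le zero_le_one]; exact Ioc_subset_Icc_self
  -- the pointwise derivative
  set F' : ℂ → ℝ → E := fun x t =>
    (x - z0) • (((t : ℝ) • (1 : ℂ)) • deriv g (z0 + (t : ℝ) • (x - z0)))
      + (1 : ℂ) • g (z0 + (t : ℝ) • (x - z0)) with hF'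
  have contmem : ∀ x ∈ closedBall z ε, ContinuousOn (fun t : ℝ => z0 + t • (x - z0)) (Icc 0 1) ∧
      MapsTo (fun t : ℝ => z0 + t • (x - z0)) (Icc 0 1) s := fun x hx =>
    ⟨by fun_prop, fun t ht => hmem x hx t ht⟩
  have key := intervalIntegral.hasDerivAt_integral_of_dominated_loc_of_deriv_le
    (𝕜 := ℂ) (μ := volume) (a := 0) (b := 1) (s := ball z ε)
    (F := fun x t => (x - z0) • g (z0 + (t : ℝ) • (x - z0))) (F' := F')
    (x₀ := z) (bound := fun _ => C1 + (‖z - z0‖ + ε) * C2) (ball_mem_nhds z εpos)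
    (by -- hF_meas
      filter_upwards [closedBall_mem_nhds z εpos] with x hx
      have := ((hgc.comp (contmem x hx).1 (contmem x hx).2).const_smul (x - z0)).mono hIsub
      exact this.aestronglyMeasurable measurableSet_uIoc)
    (by -- hF_int
      have hx : z ∈ closedBall z ε := mem_closedBall_self εpos.le
      apply ContinuousOn.intervalIntegrable
      rw [uIcc_of_le zero_le_one]
      exact (hgc.comp (contmem z hx).1 (contmem z hx).2).const_smul (z - z0))
    (by -- hF'_meas
      have hx : z ∈ closedBall z ε := mem_closedBall_self εpos.le
      have c1 : ContinuousOn (fun t : ℝ => deriv g (z0 + t • (z - z0))) (Icc 0 1) :=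
        hdc.comp (contmem z hx).1 (contmem z hx).2
      have c2 : ContinuousOn (fun t : ℝ => g (z0 + t • (z - z0))) (Icc 0 1) :=
        hgc.comp (contmem z hx).1 (contmem z hx).2
      have : ContinuousOn (F' z) (Icc 0 1) := by
        apply ContinuousOn.add
        · exact ContinuousOn.const_smul
            (ContinuousOn.smul (by fun_prop) c1) (z - z0)
        · exact c2.const_smul _
      exact (this.mono hIsub).aestronglyMeasurable measurableSet_uIoc)
    (by -- h_bound
      refine Eventually.of_forall fun t ht x hx => ?_
      have ht' : t ∈ Icc (0:ℝ) 1 := hIsub ht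
      have hσK : z0 + (t : ℝ) • (x - z0) ∈ Kc :=
        ⟨(t, x), ⟨ht', ball_subset_closedBall hx⟩, rfl⟩
      have e1 : ‖x - z0‖ ≤ ‖z - z0‖ + ε := by
        calc ‖x - z0‖ ≤ ‖x - z‖ + ‖z - z0‖ := norm_sub_le_norm_sub_add_norm_sub x z z0
          _ ≤ ‖z - z0‖ + ε := by
              have : ‖x - z‖ ≤ ε := by
                rw [← dist_eq_norm]; exact (mem_ball.1 hx).le
              linarith
      have e2 : |t| ≤ 1 := by
        rw [abs_le]; constructor <;> [linarith [ht'.1]; linarith [ht'.2]]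
      have n1 : ‖deriv g (z0 + (t : ℝ) • (x - z0))‖ ≤ C2 := hC2 _ hσK
      have n2 : ‖g (z0 + (t : ℝ) • (x - z0))‖ ≤ C1 := hC1 _ hσK
      calc ‖F' x t‖ ≤ ‖x - z0‖ * (|t| * ‖deriv g (z0 + (t : ℝ) • (x - z0))‖)
            + ‖g (z0 + (t : ℝ) • (x - z0))‖ := by
            refine (norm_add_le _ _).trans (le_of_eq ?_)
            rw [norm_smul, norm_smul, norm_smul, norm_one, one_smul]
            simp only [Real.norm_eq_abs, mul_one]
        _ ≤ C1 + (‖z - z0‖ + ε) * C2 := by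
            have hd0 : (0:ℝ) ≤ ‖deriv g (z0 + (t : ℝ) • (x - z0))‖ := norm_nonneg _
            have m1 : |t| * ‖deriv g (z0 + (t : ℝ) • (x - z0))‖ ≤ C2 := by nlinarith [abs_nonneg t]
            have m2 : ‖x - z0‖ * (|t| * ‖deriv g (z0 + (t : ℝ) • (x - z0))‖)
                ≤ (‖z - z0‖ + ε) * C2 :=
              mul_le_mul e1 m1 (by positivity) (by positivity)
            linarith
      )
    (intervalIntegrable_const)
    (by -- h_diff
      refine Eventually.of_forall fun t ht x hx => ?_
      have ht' : t ∈ Icc (0:ℝ) 1 := hIsub ht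
      have hxσ : z0 + (t : ℝ) • (x - z0) ∈ s := hmem x (ball_subset_closedBall hx) t ht'
      have h1 : HasDerivAt (fun x : ℂ => x - z0) 1 x := (hasDerivAt_id x).sub_const z0
      have h3 : HasDerivAt (fun w : ℂ => z0 + (t : ℝ) • (w - z0)) ((t : ℝ) • (1 : ℂ)) x :=
        (h1.const_smul (t : ℝ)).const_add z0
      have h4 : HasDerivAt g (deriv g (z0 + (t : ℝ) • (x - z0))) (z0 + (t : ℝ) • (x - z0)) :=
        hg' _ hxσ
      have h5 := HasDerivAt.scomp (𝕜 := ℂ) (𝕜' := ℂ) x h4 h3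
      exact h1.smul h5)
  -- now identify the value of the derivative integral
  obtain ⟨-, hD⟩ := key
  have hval : (∫ t in (0:ℝ)..1, F' z t) = g z := by
    have hderiv : ∀ t ∈ uIcc (0:ℝ) 1,
        HasDerivAt (fun τ : ℝ => τ • g (z0 + τ • (z - z0))) (F' z t) t := by
      intro t ht
      rw [uIcc_of_le zero_le_one] at ht
      have hσs : z0 + (t : ℝ) • (z - z0) ∈ s := hmem z (mem_closedBall_self εpos.le) t ht
      have hσ : HasDerivAt (fun τ : ℝ => z0 + τ • (z - z0)) (z - z0) t := by
        simpa using (((hasDerivAt_id t).smul_const (z - z0)).const_add z0)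
      have h4 : HasDerivAt g (deriv g (z0 + (t : ℝ) • (z - z0))) (z0 + (t : ℝ) • (z - z0)) :=
        hg' _ hσs
      have h5 := HasDerivAt.scomp (𝕜 := ℝ) (𝕜' := ℂ) t h4 hσ
      have h6 := HasDerivAt.fun_smul (𝕜 := ℝ) (𝕜' := ℝ) (hasDerivAt_id t) h5
      have h7 : HasDerivAt (fun τ : ℝ => τ • g (z0 + τ • (z - z0)))
          (t • ((z - z0) • deriv g (z0 + (t : ℝ) • (z - z0))) + g (z0 + (t : ℝ) • (z - z0))) t := by
        simpa [Function.comp] using h6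
      have e3 : F' z t
          = t • ((z - z0) • deriv g (z0 + (t : ℝ) • (z - z0))) + g (z0 + (t : ℝ) • (z - z0)) := by
        simp only [hF', one_smul]
        rw [smul_one_smul, smul_comm]
      rw [e3]
      exact h7
    have hint : IntervalIntegrable (F' z) volume 0 1 := by
      apply ContinuousOn.intervalIntegrable
      rw [uIcc_of_le zero_le_one]
      have hx : z ∈ closedBall z ε := mem_closedBall_self εpos.le
      apply ContinuousOn.add
      · exact ContinuousOn.const_smul
          (ContinuousOn.smul (by fun_prop) (hdc.comp (contmem z hx).1 (contmem z hx).2)) _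
      · exact (hgc.comp (contmem z hx).1 (contmem z hx).2).const_smul _
    have := intervalIntegral.integral_eq_sub_of_hasDerivAt hderiv hint
    rw [this]
    simp
  rwa [hval] at hD

theorem exists_ode_solution {A : ℂ → (E →L[ℂ] E)} {z0 : ℂ} {r R M : ℝ}
    (hr : 0 < r) (hrR : r < R) (hA : DifferentiableOn ℂ A (ball z0 R))
    (hM : ∀ w ∈ closedBall z0 r, ‖A w‖ ≤ M) (hMr : M * r < 1) (v : E) :
    ∃ Y : ℂ → E, DifferentiableOn ℂ Y (ball z0 r) ∧ Y z0 = v ∧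
      ∀ z ∈ ball z0 r, HasDerivAt Y (A z (Y z)) z := by
  classical
  have hM0 : 0 ≤ M := le_trans (norm_nonneg _) (hM z0 (mem_closedBall_self hr.le))
  have hsub : closedBall z0 r ⊆ ball z0 R := closedBall_subset_ball hrR
  have hAc : ContinuousOn A (ball z0 R) := hA.continuousOn
  have hρc : Continuous (projCB z0 r) := continuous_projCB hr
  have hρmem : ∀ w, projCB z0 r w ∈ closedBall z0 r := projCB_mem hr.le
  set clamp : ℝ → ℝ := fun t => max 0 (min 1 t) with hclamp
  have hclamp_mem : ∀ t, clamp t ∈ Icc (0:ℝ) 1 := fun t =>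
    ⟨le_max_left _ _, max_le (by norm_num) (min_le_left _ _)⟩
  have hclamp_eq : ∀ t ∈ Icc (0:ℝ) 1, clamp t = t := fun t ht => by
    rw [hclamp]; simp only [min_eq_right ht.2, max_eq_right ht.1]
  have hclampc : Continuous clamp := by fun_prop
  set σ : ℂ → ℝ → ℂ := fun w t => z0 + clamp t • (projCB z0 r w - z0) with hσ
  have hσmem : ∀ w t, σ w t ∈ closedBall z0 r := fun w t =>
    (convex_closedBall z0 r).add_smul_sub_mem (mem_closedBall_self hr.le) (hρmem w)
      (hclamp_mem t)
  set ig : (ℂ → E) → ℂ → ℝ → E :=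
    fun u w t => (projCB z0 r w - z0) • (A (σ w t) (u (σ w t))) with hig
  have hig_cont : ∀ u : ℂ → E, Continuous u →
      Continuous (Function.uncurry (fun w t => ig u w t)) := by
    intro u hu
    have hσc : Continuous (fun p : ℂ × ℝ => σ p.1 p.2) := by
      apply continuous_const.add
      exact ((hclampc.comp continuous_snd).smul
        (((hρc.comp continuous_fst)).sub continuous_const))
    have hAσ : Continuous (fun p : ℂ × ℝ => A (σ p.1 p.2)) :=
      hAc.comp_continuous hσc (fun p => hsub (hσmem p.1 p.2))
    exact (((hρc.comp continuous_fst)).sub continuous_const).smul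
      (hAσ.clm_apply (hu.comp hσc))
  have hig_bound : ∀ (u : BoundedContinuousFunction ℂ E) w t, ‖ig (⇑u) w t‖ ≤ r * (M * ‖u‖) := by
    intro u w t
    rw [hig]
    simp only [norm_smul]
    have b1 : ‖projCB z0 r w - z0‖ ≤ r := by
      have := hρmem w; rwa [mem_closedBall, dist_eq_norm] at this
    have b2 : ‖A (σ w t) (u (σ w t))‖ ≤ M * ‖u‖ := by
      refine ((A (σ w t)).le_opNorm _).trans ?_
      exact mul_le_mul (hM _ (hσmem w t)) (u.norm_coe_le_norm _) (norm_nonneg _) hM0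
    exact mul_le_mul b1 b2 (norm_nonneg _) (by positivity)
  have hig_int : ∀ (u : ℂ → E), Continuous u → ∀ w,
      IntervalIntegrable (fun t => ig u w t) volume 0 1 := by
    intro u hu w
    exact (((hig_cont u hu).comp (continuous_const.prodMk continuous_id)).intervalIntegrable 0 1)
  -- the Picard operator
  set T : BoundedContinuousFunction ℂ E → BoundedContinuousFunction ℂ E := fun u =>
    ofNormedAddCommGroup (fun w => v + ∫ t in (0:ℝ)..1, ig (⇑u) w t)
      (continuous_const.add
        (intervalIntegral.continuous_parametric_intervalIntegral_of_continuous'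
          (hig_cont (⇑u) u.continuous) 0 1))
      (‖v‖ + r * (M * ‖u‖))
      (fun w => by
        refine (norm_add_le _ _).trans ?_
        have := intervalIntegral.norm_integral_le_of_norm_le_const
          (C := r * (M * ‖u‖)) (f := fun t => ig (⇑u) w t) (a := 0) (b := 1)
          (fun t _ => hig_bound u w t)
        simp only [sub_zero, abs_one, mul_one] at this
        linarith) with hT
  have hTcoe : ∀ (u : BoundedContinuousFunction ℂ E) w,
      T u w = v + ∫ t in (0:ℝ)..1, ig (⇑u) w t := by
    intro u w; rw [hT]; simp [coe_ofNormedAddCommGroup]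
  set K : NNReal := Real.toNNReal (M * r) with hK
  have hK1 : K < 1 := by
    rw [hK, ← NNReal.coe_lt_coe]
    push_cast
    rw [Real.coe_toNNReal']
    exact max_lt hMr one_pos
  have hLip : LipschitzWith K T := by
    apply LipschitzWith.of_dist_le_mul
    intro u u'
    rw [BoundedContinuousFunction.dist_le (by positivity)]
    intro w
    rw [dist_eq_norm, hTcoe, hTcoe]
    have hsubint : (v + ∫ t in (0:ℝ)..1, ig (⇑u) w t) - (v + ∫ t in (0:ℝ)..1, ig (⇑u') w t)
        = ∫ t in (0:ℝ)..1, (projCB z0 r w - z0) •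
            (A (σ w t) (u (σ w t) - u' (σ w t))) := by
      rw [add_sub_add_left_eq_sub,
        ← intervalIntegral.integral_sub (hig_int _ u.continuous w) (hig_int _ u'.continuous w)]
      congr 1
      funext t
      rw [hig]
      simp [smul_sub, map_sub]
    rw [hsubint]
    have hb : ∀ t ∈ Set.uIoc (0:ℝ) 1, ‖(projCB z0 r w - z0) •
        (A (σ w t) (u (σ w t) - u' (σ w t)))‖ ≤ (K : ℝ) * dist u u' := by
      intro t _
      rw [norm_smul]
      have b1 : ‖projCB z0 r w - z0‖ ≤ r := by
        have := hρmem w; rwa [mem_closedBall, dist_eq_norm] at this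
      have b2 : ‖A (σ w t) (u (σ w t) - u' (σ w t))‖ ≤ M * dist u u' := by
        refine ((A (σ w t)).le_opNorm _).trans ?_
        refine mul_le_mul (hM _ (hσmem w t)) ?_ (norm_nonneg _) hM0
        rw [← dist_eq_norm]
        exact BoundedContinuousFunction.dist_coe_le_dist _
      calc ‖projCB z0 r w - z0‖ * ‖A (σ w t) (u (σ w t) - u' (σ w t))‖
          ≤ r * (M * dist u u') := mul_le_mul b1 b2 (norm_nonneg _) hr.le
        _ = (M * r) * dist u u' := by ring
        _ ≤ (K : ℝ) * dist u u' := by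
            apply mul_le_mul_of_nonneg_right _ dist_nonneg
            rw [hK, Real.coe_toNNReal']
            exact le_max_left _ _
    have := intervalIntegral.norm_integral_le_of_norm_le_const hb
    simpa using this
  have hcontract : ContractingWith K T := ⟨hK1, hLip⟩
  set Yb := ContractingWith.fixedPoint T hcontract with hYb
  have hfix : T Yb = Yb := hcontract.fixedPoint_isFixedPt
  -- key invariance property
  have hTkey : ∀ u : BoundedContinuousFunction ℂ E, DifferentiableOn ℂ (⇑u) (ball z0 r) →
      ∀ z ∈ ball z0 r, HasDerivAt (⇑(T u)) (A z (u z)) z := by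
    intro u hu z hz
    have hgdiff : DifferentiableOn ℂ (fun w => A w (u w)) (ball z0 r) :=
      (hA.mono (ball_subset_ball hrR.le)).clm_apply hu
    have hP := hasDerivAt_segPrimitive isOpen_ball (convex_ball z0 r)
      (mem_ball_self hr) hgdiff hz
    have heq : ∀ᶠ w in nhds z, (⇑(T u)) w
        = v + ∫ t in (0:ℝ)..1, (w - z0) • (fun w' => A w' (u w')) (z0 + (t:ℝ) • (w - z0)) := by
      filter_upwards [isOpen_ball.mem_nhds hz] with w hw
      rw [hTcoe]
      congr 1
      have hρw : projCB z0 r w = w := projCB_eq_self (ball_subset_closedBall hw)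
      apply intervalIntegral.integral_congr
      intro t ht
      rw [uIcc_of_le zero_le_one] at ht
      rw [hig, hσ]
      simp only [hρw, hclamp_eq t ht]
    exact ((hP.const_add v).congr_of_eventuallyEq heq)
  -- holomorphy of iterates
  have hiter : ∀ n : ℕ, DifferentiableOn ℂ (⇑(T^[n] (const ℂ v))) (ball z0 r) := by
    intro n
    induction n with
    | zero => simpa using differentiableOn_const v
    | succ n ih =>
        rw [Function.iterate_succ_apply']
        exact fun z hz => ((hTkey _ ih z hz).differentiableAt).differentiableWithinAt
  have htendsto := hcontract.tendsto_iterate_fixedPoint (const ℂ v)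
  have hunif : TendstoUniformly (fun n => ⇑(T^[n] (const ℂ v))) (⇑Yb) atTop :=
    BoundedContinuousFunction.tendsto_iff_tendstoUniformly.1 htendsto
  have hYdiff : DifferentiableOn ℂ (⇑Yb) (ball z0 r) :=
    (hunif.tendstoUniformlyOn (s := ball z0 r)).tendstoLocallyUniformlyOn.differentiableOn
      (Eventually.of_forall hiter) isOpen_ball
  refine ⟨⇑Yb, hYdiff, ?_, ?_⟩
  · have : (⇑(T Yb)) z0 = v := by
      rw [hTcoe]
      have hρ0 : projCB z0 r z0 = z0 := projCB_eq_self (mem_closedBall_self hr.le)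
      have : ∀ t : ℝ, ig (⇑Yb) z0 t = 0 := by
        intro t; rw [hig]; simp [hρ0]
      simp [this]
    rw [hfix] at this
    exact this
  · intro z hz
    have := hTkey Yb hYdiff z hz
    rwa [hfix] at this


theorem ode_solution_unique_ball {A : ℂ → (E →L[ℂ] E)} {z0 : ℂ} {r M : ℝ}
    (hM : ∀ w ∈ closedBall z0 r, ‖A w‖ ≤ M)
    {Y Z : ℂ → E}
    (hY : ∀ z ∈ ball z0 r, HasDerivAt Y (A z (Y z)) z)
    (hZ : ∀ z ∈ ball z0 r, HasDerivAt Z (A z (Z z)) z)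
    (h0 : Y z0 = Z z0) : Set.EqOn Y Z (ball z0 r) := by
  intro z hz
  have hrpos : 0 < r := pos_of_mem_ball hz
  have hM0 : 0 ≤ M := le_trans (norm_nonneg _) (hM z0 (mem_closedBall_self hrpos.le))
  set c : ℂ := z - z0 with hc
  have hcr : ‖c‖ < r := by rwa [hc, ← dist_eq_norm, ← mem_ball]
  set clamp : ℝ → ℝ := fun t => max 0 (min 1 t) with hclamp
  have hclamp_mem : ∀ t, clamp t ∈ Icc (0:ℝ) 1 := fun t =>
    ⟨le_max_left _ _, max_le (by norm_num) (min_le_left _ _)⟩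
  have hclamp_eq : ∀ t ∈ Icc (0:ℝ) 1, clamp t = t := fun t ht => by
    rw [hclamp]; simp only [min_eq_right ht.2, max_eq_right ht.1]
  set σ : ℝ → ℂ := fun t => z0 + t • c with hσ
  have hσmem : ∀ t ∈ Icc (0:ℝ) 1, σ t ∈ ball z0 r := by
    intro t ht
    rw [hσ, mem_ball, dist_eq_norm]
    simp only [add_sub_cancel_left]
    rw [norm_smul, Real.norm_eq_abs, abs_of_nonneg ht.1]
    calc t * ‖c‖ ≤ 1 * ‖c‖ := by gcongr; exact ht.2
      _ < r := by simpa using hcr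
  set v : ℝ → E → E := fun t x => c • (A (σ (clamp t)) x) with hv
  set K : NNReal := Real.toNNReal (r * M) with hK
  have hlip : ∀ t, LipschitzWith K (v t) := by
    intro t
    have h1 : LipschitzWith ‖c • A (σ (clamp t))‖₊ (⇑(c • A (σ (clamp t)))) :=
      (c • A (σ (clamp t))).lipschitz
    have h2 : ⇑(c • A (σ (clamp t))) = v t := by
      funext x
      rw [hv]
      simp
    rw [h2] at h1
    refine h1.weaken ?_
    rw [← NNReal.coe_le_coe, coe_nnnorm, hK, Real.coe_toNNReal']
    refine le_max_of_le_left ?_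
    calc ‖c • A (σ (clamp t))‖ ≤ ‖c‖ * ‖A (σ (clamp t))‖ :=
          norm_smul_le (β := E →L[ℂ] E) c (A (σ (clamp t)))
      _ ≤ r * M := mul_le_mul hcr.le
          (hM _ (ball_subset_closedBall (hσmem _ (hclamp_mem t)))) (norm_nonneg _) hrpos.le
  have hσd : ∀ t : ℝ, HasDerivAt σ c t := fun t => by
    rw [hσ]
    simpa using (((hasDerivAt_id t).smul_const c).const_add z0)
  have hσc : Continuous σ := by rw [hσ]; fun_prop
  have hcont : ∀ {W : ℂ → E}, (∀ z ∈ ball z0 r, HasDerivAt W (A z (W z)) z) →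
      ContinuousOn (W ∘ σ) (Icc 0 1) := by
    intro W hW
    intro t ht
    exact (((hW (σ t) (hσmem t ht)).differentiableAt.continuousAt).comp
      (hσc.continuousAt)).continuousWithinAt
  have hderiv : ∀ {W : ℂ → E}, (∀ z ∈ ball z0 r, HasDerivAt W (A z (W z)) z) →
      ∀ t ∈ Ico (0:ℝ) 1, HasDerivWithinAt (W ∘ σ) (v t ((W ∘ σ) t)) (Ici t) t := by
    intro W hW t ht
    have ht' : t ∈ Icc (0:ℝ) 1 := Ico_subset_Icc_self ht
    have h1 := HasDerivAt.scomp (𝕜 := ℝ) (𝕜' := ℂ) t (hW (σ t) (hσmem t ht')) (hσd t)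
    have h2 : v t ((W ∘ σ) t) = c • (A (σ t)) (W (σ t)) := by
      show c • (A (σ (clamp t))) ((W ∘ σ) t) = _
      rw [hclamp_eq t ht']
      rfl
    rw [h2]
    exact h1.hasDerivWithinAt
  have heq := ODE_solution_unique (v := v) hlip (hcont hY) (hderiv hY) (hcont hZ) (hderiv hZ)
    (by simp [hσ, h0])
  have h1 := heq (right_mem_Icc.2 zero_le_one)
  have hσ1 : σ 1 = z := by rw [hσ]; simp [hc]
  simpa [hσ1] using h1

end

open Finset

/-- `F` is an analytic continuation of `f` along the path `γ` (defined on `[0,1]`):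
`F t` is analytic at `γ t` for each time `t`, `F 0` agrees with `f` near `γ 0`,
and the family is locally coherent. -/
def ContinuesAlong (f : ℂ → ℂ) (γ : ℝ → ℂ) : Prop :=
  ∃ F : ℝ → ℂ → ℂ,
    (∀ᶠ z in nhds (γ 0), F 0 z = f z) ∧
    (∀ t ∈ Set.Icc (0 : ℝ) 1, AnalyticAt ℂ (F t) (γ t)) ∧
    (∀ t ∈ Set.Icc (0 : ℝ) 1, ∀ᶠ s in nhds t, ∀ᶠ z in nhds (γ t), F s z = F t z)

/-- A holonomic function analytic at `0` can be continued analytically along any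
path avoiding the (finite) zero set of the leading coefficient `q 0`; in
particular it has only finitely many singularities. -/
theorem holonomic_continuation (f : ℂ → ℂ) (hf : AnalyticAt ℂ f 0)
    (e : ℕ) (q : ℕ → Polynomial ℂ) (hq : q 0 ≠ 0)
    (hode : ∀ᶠ z in nhds (0 : ℂ),
      ∑ k ∈ Finset.range (e + 1), (q k).eval z * iteratedDeriv (e - k) f z = 0) :
    {z : ℂ | (q 0).eval z = 0}.Finite ∧
    ∀ γ : ℝ → ℂ, ContinuousOn γ (Set.Icc 0 1) → γ 0 = 0 →
      (∀ t ∈ Set.Icc (0 : ℝ) 1, (q 0).eval (γ t) ≠ 0) →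
      ContinuesAlong f γ := by
  constructor
  · exact (q 0).finite_setOf_isRoot hq
  intro γ hγ hγ0 hγq
  have hq00 : (q 0).eval 0 ≠ 0 := by
    have := hγq 0 ⟨le_refl 0, zero_le_one⟩
    rwa [hγ0] at this
  have hq0cont : Continuous fun z : ℂ => (q 0).eval z := (q 0).continuous
  have hq0ne : ∀ᶠ z in nhds (0:ℂ), (q 0).eval z ≠ 0 :=
    hq0cont.continuousAt.eventually_ne hq00
  rcases Nat.eq_zero_or_pos e with he0 | he
  · -- degenerate case : f vanishes near 0
    subst he0
    have hev : ∀ᶠ z in nhds (0:ℂ), f z = 0 := by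
      filter_upwards [hode, hq0ne] with z h1 h2
      simp only [zero_add, Finset.sum_range_one, Nat.sub_zero, iteratedDeriv_zero] at h1
      exact (mul_eq_zero.1 h1).resolve_left h2
    refine ⟨fun _ _ => 0, ?_, fun t _ => analyticAt_const, fun t _ => ?_⟩
    · rw [hγ0]
      filter_upwards [hev] with z hz using hz.symm
    · exact Eventually.of_forall fun s => Eventually.of_forall fun z => rfl
  -- main case
  set U : Set ℂ := {z | (q 0).eval z ≠ 0} with hUdef
  have hUopen : IsOpen U := isOpen_compl_singleton.preimage hq0cont
  set φ : ℕ → ℂ → ℂ := fun k z => -((q (k+1)).eval z / (q 0).eval z) with hφ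
  set D : (Fin e → ℂ) →L[ℂ] (Fin e → ℂ) := ContinuousLinearMap.pi (fun i =>
    if h : (i : ℕ) + 1 < e then ContinuousLinearMap.proj (⟨(i:ℕ)+1, h⟩ : Fin e) else 0) with hD
  set C : ℕ → ((Fin e → ℂ) →L[ℂ] (Fin e → ℂ)) := fun k => ContinuousLinearMap.pi (fun i =>
    if (i : ℕ) + 1 = e then ContinuousLinearMap.proj (⟨e - (k+1), by omega⟩ : Fin e) else 0)
    with hC
  set A : ℂ → ((Fin e → ℂ) →L[ℂ] (Fin e → ℂ)) :=
    fun z => D + ∑ k ∈ Finset.range e, φ k z • C k with hA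
  have hAapp : ∀ z w (i : Fin e), A z w i =
      (if h : (i : ℕ) + 1 < e then w ⟨(i:ℕ)+1, h⟩ else 0) +
      (if (i : ℕ) + 1 = e then
        ∑ k ∈ Finset.range e, φ k z * w ⟨e - (k+1), by omega⟩ else 0) := by
    intro z w i
    rw [hA]
    simp only [ContinuousLinearMap.add_apply, ContinuousLinearMap.sum_apply,
      ContinuousLinearMap.smul_apply, ContinuousLinearMap.pi_apply, hD, hC,
      Finset.sum_apply, Pi.add_apply, Pi.smul_apply, smul_eq_mul]
    congr 1
    · split_ifs with h <;> rfl
    · split_ifs with h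
      · rfl
      · simp
  have hφd : ∀ k, DifferentiableOn ℂ (φ k) U := fun k =>
    (((q (k+1)).differentiable.differentiableOn).div
      ((q 0).differentiable.differentiableOn) (fun z hz => hz)).neg
  have hAd : DifferentiableOn ℂ A U := by
    rw [hA]
    apply (differentiableOn_const D).add
    apply DifferentiableOn.fun_sum
    intro k _
    exact (hφd k).smul_const (C k)
  -- the vector of derivatives of f solves the system near 0
  set Yf : ℂ → (Fin e → ℂ) := fun z i => iteratedDeriv (i : ℕ) f z with hYfdef
  have hfa : ∀ᶠ z in nhds (0:ℂ), AnalyticAt ℂ f z := hf.eventually_analyticAt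
  obtain ⟨ρf, hρfpos, hballf⟩ := Metric.eventually_nhds_iff_ball.1 (hfa.and (hq0ne.and hode))
  have hfan : AnalyticOnNhd ℂ f (Metric.ball 0 ρf) := fun z hz => (hballf z hz).1
  have hitd : ∀ n : ℕ, AnalyticOnNhd ℂ (iteratedDeriv n f) (Metric.ball 0 ρf) := by
    intro n
    induction n with
    | zero => simpa [iteratedDeriv_zero] using hfan
    | succ n ih => rw [iteratedDeriv_succ]; exact ih.deriv
  have hYfsol : ∀ z ∈ Metric.ball (0:ℂ) ρf, HasDerivAt Yf (A z (Yf z)) z := by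
    intro z hz
    rw [hasDerivAt_pi]
    intro i
    have hid : HasDerivAt (fun w => iteratedDeriv (i:ℕ) f w) (iteratedDeriv ((i:ℕ)+1) f z) z := by
      rw [iteratedDeriv_succ]
      exact ((hitd (i:ℕ) z hz).differentiableAt).hasDerivAt
    have hfun : (fun x => Yf x i) = fun w => iteratedDeriv (i:ℕ) f w := rfl
    rw [hfun]
    rcases lt_or_eq_of_le (Nat.succ_le_of_lt i.isLt) with hlt | heq
    · have hval : A z (Yf z) i = iteratedDeriv ((i:ℕ)+1) f z := by
        rw [hAapp, dif_pos hlt, if_neg (by omega)]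
        simp [hYfdef]
      rw [hval]; exact hid
    · have hq0z : (q 0).eval z ≠ 0 := (hballf z hz).2.1
      have hsum := (hballf z hz).2.2
      rw [Finset.sum_range_succ'] at hsum
      simp only [Nat.sub_zero] at hsum
      have h1 : ∑ k ∈ Finset.range e, (q (k+1)).eval z * iteratedDeriv (e-(k+1)) f z
          = -((q 0).eval z * iteratedDeriv e f z) := by linear_combination hsum
      have h2 : A z (Yf z) i = ∑ k ∈ Finset.range e, φ k z * iteratedDeriv (e-(k+1)) f z := by
        rw [hAapp, dif_neg (by omega), if_pos heq]
        simp [hYfdef]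
      have h4 : ∑ k ∈ Finset.range e, φ k z * iteratedDeriv (e-(k+1)) f z
          = iteratedDeriv e f z := by
        have expand : ∀ k, φ k z * iteratedDeriv (e-(k+1)) f z
            = -((q (k+1)).eval z * iteratedDeriv (e-(k+1)) f z) / (q 0).eval z := fun k => by
          rw [hφ]; ring
        calc ∑ k ∈ Finset.range e, φ k z * iteratedDeriv (e-(k+1)) f z
            = ∑ k ∈ Finset.range e,
              -((q (k+1)).eval z * iteratedDeriv (e-(k+1)) f z) / (q 0).eval z :=
              Finset.sum_congr rfl fun k _ => expand k
          _ = (∑ k ∈ Finset.range e, -((q (k+1)).eval z * iteratedDeriv (e-(k+1)) f z))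
              / (q 0).eval z := by rw [Finset.sum_div]
          _ = (-∑ k ∈ Finset.range e, ((q (k+1)).eval z * iteratedDeriv (e-(k+1)) f z))
              / (q 0).eval z := by rw [Finset.sum_neg_distrib]
          _ = iteratedDeriv e f z := by rw [h1]; field_simp
      have hval : A z (Yf z) i = iteratedDeriv ((i:ℕ)+1) f z := by
        rw [h2, h4]; congr 1; omega
      rw [hval]; exact hid
  -- covering the path
  set K : Set ℂ := γ '' Set.Icc 0 1 with hKdef
  have hKcomp : IsCompact K := isCompact_Icc.image_of_continuousOn hγ
  have hKU : K ⊆ U := by rintro _ ⟨t, ht, rfl⟩; exact hγq t ht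
  obtain ⟨δ, hδpos, hδU⟩ := hKcomp.exists_cthickening_subset_open hUopen hKU
  have hKth : IsCompact (Metric.cthickening δ K) := hKcomp.cthickening
  obtain ⟨M0, hM0⟩ := hKth.exists_bound_of_continuousOn
    (hAd.continuousOn.mono hδU)
  set M : ℝ := max M0 0 with hMdef
  have hM : ∀ w ∈ Metric.cthickening δ K, ‖A w‖ ≤ M := fun w hw =>
    (hM0 w hw).trans (le_max_left _ _)
  have hMnn : (0:ℝ) ≤ M := le_max_right _ _
  set r : ℝ := min (δ/2) (1/(2*(M+1))) with hrdef
  have hrpos : 0 < r := lt_min (by linarith) (by positivity)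
  have hrδ : r < δ := lt_of_le_of_lt (min_le_left _ _) (by linarith)
  have hMr : M * r < 1 := by
    have h1 : r ≤ 1/(2*(M+1)) := min_le_right _ _
    have h2 : M * r ≤ M * (1/(2*(M+1))) := mul_le_mul_of_nonneg_left h1 hMnn
    have h3 : M * (1/(2*(M+1))) < 1 := by
      rw [mul_one_div, div_lt_one (by positivity)]
      linarith
    linarith
  have hcb : ∀ p ∈ K, ∀ w ∈ Metric.closedBall p r, ‖A w‖ ≤ M := fun p hp w hw =>
    hM w (Metric.closedBall_subset_cthickening hp δ
      (Metric.closedBall_subset_closedBall hrδ.le hw))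
  have hballU : ∀ p ∈ K, Metric.ball p δ ⊆ U := fun p hp =>
    (Metric.ball_subset_closedBall.trans
      (Metric.closedBall_subset_cthickening hp δ)).trans hδU
  -- uniform continuity / grid
  obtain ⟨η, hηpos, hη⟩ := Metric.uniformContinuousOn_iff.1
    (isCompact_Icc.uniformContinuousOn_of_continuous hγ) (r/2) (by positivity)
  obtain ⟨n0, hn0⟩ := exists_nat_one_div_lt hηpos
  obtain ⟨N, hNposn, hNη⟩ : ∃ N : ℕ, 0 < N ∧ 1/(N:ℝ) < η :=
    ⟨n0+1, Nat.succ_pos _, by push_cast; exact hn0⟩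
  have hNpos : (0:ℝ) < (N:ℝ) := by exact_mod_cast hNposn
  set tg : ℕ → ℝ := fun i => min ((i:ℝ)/N) 1 with htgdef
  have htg_mem : ∀ i, tg i ∈ Set.Icc (0:ℝ) 1 := fun i =>
    ⟨le_min (by positivity) zero_le_one, min_le_right _ _⟩
  set c : ℕ → ℂ := fun i => γ (tg i) with hcdef
  have hcK : ∀ i, c i ∈ K := fun i => ⟨tg i, htg_mem i, rfl⟩
  have htg_step : ∀ i : ℕ, tg i ≤ tg (i+1) ∧ tg (i+1) ≤ tg i + 1/N := by
    intro i
    have hmono : (i:ℝ)/(N:ℝ) ≤ ((i:ℝ)+1)/(N:ℝ) := by gcongr; linarith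
    have hNinv : (0:ℝ) < 1/N := by positivity
    constructor
    · refine min_le_min ?_ le_rfl
      simpa using hmono
    · rcases le_or_gt (((i:ℝ)+1)/(N:ℝ)) 1 with h | h
      · have e1 : tg (i+1) = ((i:ℝ)+1)/(N:ℝ) := by
          simp only [htgdef]
          push_cast
          exact min_eq_left h
        have e2 : tg i = (i:ℝ)/(N:ℝ) := by
          simp only [htgdef]
          exact min_eq_left (hmono.trans h)
        rw [e1, e2, add_div]
      · have e1 : tg (i+1) = 1 := by
          simp only [htgdef]
          push_cast
          exact min_eq_right h.le
        rw [e1]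
        rcases le_or_gt ((i:ℝ)/(N:ℝ)) 1 with h2 | h2
        · have e2 : tg i = (i:ℝ)/(N:ℝ) := by
            simp only [htgdef]; exact min_eq_left h2
          rw [e2]
          rw [add_div] at h
          linarith
        · have e2 : tg i = 1 := by
            simp only [htgdef]; exact min_eq_right h2.le
          rw [e2]
          linarith
  have hcstep : ∀ i : ℕ, dist (c (i+1)) (c i) < r/2 := by
    intro i
    refine hη _ (htg_mem (i+1)) _ (htg_mem i) ?_
    rw [Real.dist_eq, abs_sub_lt_iff]
    have := htg_step i
    constructor
    · have : 1/(N:ℝ) < η := hNη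
      linarith [this, (htg_step i).1, (htg_step i).2]
    · linarith [(htg_step i).1, hηpos]
  -- chained local solutions along the path
  have hstep : ∀ i (v0 : Fin e → ℂ), ∃ Y : ℂ → (Fin e → ℂ),
      DifferentiableOn ℂ Y (Metric.ball (c i) r) ∧ Y (c i) = v0 ∧
      ∀ z ∈ Metric.ball (c i) r, HasDerivAt Y (A z (Y z)) z := fun i v0 =>
    exists_ode_solution hrpos hrδ (hAd.mono (hballU (c i) (hcK i)))
      (hcb (c i) (hcK i)) hMr v0
  choose Ysel h1sel h2sel h3sel using hstep
  set vs : ℕ → (Fin e → ℂ) := fun i =>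
    Nat.rec (Yf 0) (fun i vi => Ysel i vi (c (i+1))) i with hvs
  set Ys : ℕ → ℂ → (Fin e → ℂ) := fun i => Ysel i (vs i) with hYs
  have hYsd : ∀ i, DifferentiableOn ℂ (Ys i) (Metric.ball (c i) r) := fun i => h1sel i (vs i)
  have hYsode : ∀ i, ∀ z ∈ Metric.ball (c i) r, HasDerivAt (Ys i) (A z (Ys i z)) z :=
    fun i => h3sel i (vs i)
  have hYsinit : Ys 0 (c 0) = Yf 0 := h2sel 0 (vs 0)
  have hYslink : ∀ i, Ys (i+1) (c (i+1)) = Ys i (c (i+1)) := fun i => h2sel (i+1) (vs (i+1))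
  have hglue : ∀ i, Set.EqOn (Ys (i+1)) (Ys i) (Metric.ball (c (i+1)) (r/2)) := by
    intro i
    refine ode_solution_unique_ball (A := A) (M := M)
      (fun w hw => hcb (c (i+1)) (hcK (i+1)) w
        (Metric.closedBall_subset_closedBall (by linarith) hw))
      (fun z hz => hYsode (i+1) z (Metric.ball_subset_ball (by linarith) hz))
      (fun z hz => hYsode i z ?_) (hYslink i)
    refine Metric.ball_subset_ball' ?_ hz
    linarith [hcstep i]
  -- index bookkeeping
  have hidx : ∀ t ∈ Set.Icc (0:ℝ) 1, (⌊t * N⌋₊ ≤ N) ∧ tg ⌊t * N⌋₊ = (⌊t * N⌋₊ : ℝ)/N ∧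
      (⌊t * N⌋₊:ℝ)/N ≤ t ∧ t < ((⌊t * N⌋₊:ℝ)+1)/N := by
    intro t ht
    have h0N : (0:ℝ) ≤ t * N := mul_nonneg ht.1 hNpos.le
    have hfl : ⌊t * N⌋₊ ≤ N := by
      have h1 : t * N ≤ N := by nlinarith [ht.2]
      calc ⌊t * N⌋₊ ≤ ⌊(N:ℝ)⌋₊ := Nat.floor_le_floor h1
        _ = N := Nat.floor_natCast N
    refine ⟨hfl, ?_, ?_, ?_⟩
    · simp only [htgdef]
      exact min_eq_left (by rw [div_le_one hNpos]; exact_mod_cast hfl)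
    · rw [div_le_iff₀ hNpos]
      exact Nat.floor_le h0N
    · rw [lt_div_iff₀ hNpos]
      exact Nat.lt_floor_add_one _
  have hγclose : ∀ t ∈ Set.Icc (0:ℝ) 1, dist (γ t) (c ⌊t * N⌋₊) < r/2 := by
    intro t ht
    obtain ⟨h1, h2, h3, h4⟩ := hidx t ht
    refine hη t ht _ (htg_mem _) ?_
    refine lt_trans ?_ hNη
    rw [Real.dist_eq, h2, abs_sub_lt_iff]
    rw [add_div] at h4
    have hNinv : (0:ℝ) < 1/N := by positivity
    exact ⟨by linarith, by linarith⟩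
  set idx0 : Fin e := ⟨0, he⟩ with hidx0
  refine ⟨fun s z => Ys (min ⌊s * N⌋₊ N) z idx0, ?_, ?_, ?_⟩
  · -- agreement with f near 0
    have htg0 : tg 0 = 0 := by simp [htgdef]
    have hc0 : c 0 = 0 := by
      show γ (tg 0) = 0
      rw [htg0, hγ0]
    have hρ'pos : 0 < min r ρf := lt_min hrpos hρfpos
    have hEq : Set.EqOn (Ys 0) Yf (Metric.ball (0:ℂ) (min r ρf)) := by
      refine ode_solution_unique_ball (A := A) (M := M) ?_ ?_ ?_ ?_
      · intro w hw
        refine hcb (c 0) (hcK 0) w ?_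
        rw [hc0]
        exact Metric.closedBall_subset_closedBall (min_le_left _ _) hw
      · intro z hz
        refine hYsode 0 z ?_
        rw [hc0]
        exact Metric.ball_subset_ball (min_le_left _ _) hz
      · intro z hz
        exact hYfsol z (Metric.ball_subset_ball (min_le_right _ _) hz)
      · rw [hc0] at hYsinit
        exact hYsinit
    rw [hγ0]
    filter_upwards [Metric.ball_mem_nhds (0:ℂ) hρ'pos] with z hz
    show Ys (min ⌊(0:ℝ) * N⌋₊ N) z idx0 = f z
    have h00 : min ⌊(0:ℝ) * N⌋₊ N = 0 := by simp
    rw [h00, hEq hz]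
    show iteratedDeriv (0:ℕ) f z = f z
    rw [iteratedDeriv_zero]
  · -- analyticity along the path
    intro t ht
    have hj := hidx t ht
    have hmem : γ t ∈ Metric.ball (c ⌊t * N⌋₊) r :=
      Metric.mem_ball.2 (lt_trans (hγclose t ht) (by linarith))
    have han : AnalyticAt ℂ (Ys ⌊t * N⌋₊) (γ t) :=
      ((hYsd _).analyticOnNhd Metric.isOpen_ball) _ hmem
    have hproj := (ContinuousLinearMap.proj (R := ℂ)
      (φ := fun _ : Fin e => ℂ) idx0).analyticAt (Ys ⌊t * N⌋₊ (γ t))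
    have hcomp := hproj.comp han
    have hmin : min ⌊t * N⌋₊ N = ⌊t * N⌋₊ := min_eq_left hj.1
    show AnalyticAt ℂ (fun z => Ys (min ⌊t * N⌋₊ N) z idx0) (γ t)
    rw [hmin]
    exact hcomp
  · -- coherence
    intro t ht
    obtain ⟨hjN, htgj, hjle, hjlt⟩ := hidx t ht
    have hNinv : (0:ℝ) < 1/N := by positivity
    have h0N : (0:ℝ) ≤ t * N := mul_nonneg ht.1 hNpos.le
    filter_upwards [Ioo_mem_nhds (by linarith : t - 1/N < t) (by linarith : t < t + 1/N)]
      with s hs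
    by_cases hss : min ⌊s * N⌋₊ N = min ⌊t * N⌋₊ N
    · exact Filter.Eventually.of_forall fun z => by rw [hss]
    rcases le_or_gt t s with hts | hst
    · -- s to the right : the index is ⌊t*N⌋₊ + 1
      have hlow : ((⌊t * N⌋₊:ℕ):ℝ) ≤ s * N :=
        le_trans (Nat.floor_le h0N) (mul_le_mul_of_nonneg_right hts hNpos.le)
      have hhigh : s * N < (⌊t * N⌋₊:ℝ) + 2 := by
        have h5 : s * N < (t + 1/N) * N := mul_lt_mul_of_pos_right hs.2 hNpos
        have h6 : (t + 1/N) * N = t * N + 1 := by field_simp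
        rw [lt_div_iff₀ hNpos] at hjlt
        linarith
      have hfloor : ⌊s * N⌋₊ = ⌊t * N⌋₊ ∨ ⌊s * N⌋₊ = ⌊t * N⌋₊ + 1 := by
        have l1 : ⌊t * N⌋₊ ≤ ⌊s * N⌋₊ := Nat.le_floor hlow
        have l2 : ⌊s * N⌋₊ < ⌊t * N⌋₊ + 2 := by
          rw [Nat.floor_lt (le_trans (by positivity) hlow)]
          exact_mod_cast hhigh
        omega
      rcases hfloor with h | h
      · exact absurd (by rw [h]) hss
      have hj1N : ⌊t * N⌋₊ + 1 ≤ N := by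
        by_contra hcon
        exact hss (by omega)
      have hγtmem : γ t ∈ Metric.ball (c (⌊t * N⌋₊+1)) (r/2) := by
        have htg1 : tg (⌊t * N⌋₊+1) = ((⌊t * N⌋₊:ℝ)+1)/N := by
          simp only [htgdef]
          push_cast
          exact min_eq_left (by rw [div_le_one hNpos]; exact_mod_cast hj1N)
        refine Metric.mem_ball.2 (hη t ht _ (htg_mem _) ?_)
        refine lt_trans ?_ hNη
        rw [Real.dist_eq, htg1, abs_sub_lt_iff]
        have hs1 : ((⌊t * N⌋₊:ℝ)+1) ≤ s * N := by
          have := Nat.floor_le (le_trans (by positivity) hlow)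
          rw [h] at this
          push_cast at this
          linarith
        have hs2 : ((⌊t * N⌋₊:ℝ)+1)/N ≤ s := by
          rw [div_le_iff₀ hNpos]; linarith
        constructor
        · linarith [hjlt]
        · linarith [hs.2, hs2]
      filter_upwards [Metric.isOpen_ball.mem_nhds hγtmem] with z hz
      rw [min_eq_left hjN, h, min_eq_left hj1N]
      exact congrFun (hglue _ hz) idx0
    · -- s to the left : the index is ⌊t*N⌋₊ - 1
      have hsN : s * N < t * N := mul_lt_mul_of_pos_right hst hNpos
      have hup : ⌊s * N⌋₊ ≤ ⌊t * N⌋₊ := Nat.floor_le_floor hsN.le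
      have hne : ⌊s * N⌋₊ ≠ ⌊t * N⌋₊ := fun hcon => hss (by rw [hcon])
      have hj1 : 1 ≤ ⌊t * N⌋₊ := by omega
      have hlow2 : ((⌊t * N⌋₊:ℝ) - 1) < s * N := by
        rw [div_le_iff₀ hNpos] at hjle
        have h2 : t - 1/N < s := hs.1
        have h3 : (t - 1/N) * N < s * N := mul_lt_mul_of_pos_right h2 hNpos
        have h4 : (t - 1/N) * N = t * N - 1 := by field_simp
        linarith
      have hfloor2 : ⌊s * N⌋₊ = ⌊t * N⌋₊ - 1 := by
        have hge : ⌊t * N⌋₊ - 1 ≤ ⌊s * N⌋₊ := by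
          apply Nat.le_floor
          rw [Nat.cast_sub hj1]
          push_cast
          linarith
        omega
      have hγtmem : γ t ∈ Metric.ball (c ⌊t * N⌋₊) (r/2) :=
        Metric.mem_ball.2 (hγclose t ht)
      filter_upwards [Metric.isOpen_ball.mem_nhds hγtmem] with z hz
      rw [min_eq_left hjN, hfloor2, min_eq_left (by omega)]
      obtain ⟨j', hj'⟩ : ∃ j', ⌊t * N⌋₊ = j' + 1 := ⟨⌊t * N⌋₊ - 1, by omega⟩
      rw [hj'] at hz ⊢
      have : j' + 1 - 1 = j' := rfl
      rw [this]
      exact (congrFun (hglue j' hz) idx0).symm
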